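/- Let n be a positive integer, a : ℤⁿ → ℂ finitely supported with a(−h) = conjugate(a(h)) for all h, and let A be a bounded linear operator on ℓ²(ℤⁿ) with action (A u)(g) = Σ_h a(h)·u(g+h). Let λ be a real number not in the spectrum of A, and let u ∈ ℓ²(ℤⁿ) satisfy (A − λI)u = δ (the Kronecker delta at 0). Then u decays exponentially: there exist a constant C > 0 and ρ ∈ (0,1) such that |u(g)| ≤ C·ρ^{|g₁| + ⋯ + |gₙ|} for all g ∈ ℤⁿ. -/

import Mathlib

open scoped ENNReal

noncomputable section ResolventDecayAux
namespace ResolventDecayAux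

variable {n : ℕ}

abbrev Hn (n : ℕ) := lp (fun _ : Fin n → ℤ => ℂ) 2

lemma two_toReal_pos : 0 < (2 : ℝ≥0∞).toReal := by norm_num

lemma memℓp_shift (f : (Fin n → ℤ) → ℂ) (hf : Memℓp f 2) (h : Fin n → ℤ) :
    Memℓp (fun g => f (g + h)) 2 := by
  rw [memℓp_gen_iff two_toReal_pos] at hf ⊢
  exact ((Equiv.addRight h).summable_iff
    (f := fun g => ‖f g‖ ^ (2 : ℝ≥0∞).toReal)).mpr hf

def shiftL (h : Fin n → ℤ) : Hn n →ₗ[ℂ] Hn n where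
  toFun u := ⟨fun g => u (g + h), memℓp_shift u (lp.memℓp u) h⟩
  map_add' u v := by ext g; simp; rfl
  map_smul' c u := by ext g; simp

lemma shiftL_norm (h : Fin n → ℤ) (u : Hn n) : ‖shiftL h u‖ = ‖u‖ := by
  rw [lp.norm_eq_tsum_rpow two_toReal_pos, lp.norm_eq_tsum_rpow two_toReal_pos]
  congr 1
  exact (Equiv.addRight h).tsum_eq (fun g => ‖u g‖ ^ (2 : ℝ≥0∞).toReal)

def shiftCLM (h : Fin n → ℤ) : Hn n →L[ℂ] Hn n :=
  LinearMap.mkContinuous (shiftL h) 1 (fun u => by rw [shiftL_norm, one_mul])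

@[simp] lemma shiftCLM_apply (h : Fin n → ℤ) (u : Hn n) (g : Fin n → ℤ) :
    (shiftCLM h u) g = u (g + h) := rfl

def evalCLM (g : Fin n → ℤ) : Hn n →L[ℂ] ℂ :=
  LinearMap.mkContinuous
    { toFun := fun u => u g
      map_add' := fun u v => by simp
      map_smul' := fun c u => by simp }
    1 (fun u => by rw [one_mul]; exact lp.norm_apply_le_norm (by norm_num) u g)

@[simp] lemma evalCLM_apply (g : Fin n → ℤ) (u : Hn n) : evalCLM g u = u g := rfl

lemma abs_apply_le_norm (g : Fin n → ℤ) (u : Hn n) : ‖u g‖ ≤ ‖u‖ := by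
  simpa using lp.norm_apply_le_norm (p := 2) (by norm_num) u g

def toeplitz (s : Finset (Fin n → ℤ)) (c : (Fin n → ℤ) → ℂ) : Hn n →L[ℂ] Hn n :=
  ∑ h ∈ s, c h • shiftCLM h

lemma toeplitz_apply (s : Finset (Fin n → ℤ)) (c : (Fin n → ℤ) → ℂ) (u : Hn n)
    (g : Fin n → ℤ) : (toeplitz s c u) g = ∑ h ∈ s, c h * u (g + h) := by
  simp [toeplitz, ContinuousLinearMap.sum_apply, lp.coeFn_sum, Finset.sum_apply]
  show (∑ i ∈ s, c i • ((shiftCLM i u : Hn n) : (Fin n → ℤ) → ℂ)) g = _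
  rw [Finset.sum_apply]
  rfl

/-- signed sum ∑ σᵢ vᵢ with σᵢ = ±1 given by a Bool vector. -/
def dotZ (b : Fin n → Bool) (v : Fin n → ℤ) : ℤ :=
  ∑ i, (if b i then (1 : ℤ) else -1) * v i

lemma dotZ_add (b : Fin n → Bool) (v w : Fin n → ℤ) :
    dotZ b (v + w) = dotZ b v + dotZ b w := by
  simp [dotZ, mul_add, Finset.sum_add_distrib]

lemma dotZ_zero (b : Fin n → Bool) : dotZ b 0 = 0 := by simp [dotZ]

end ResolventDecayAux
end ResolventDecayAux

set_option maxHeartbeats 1000000 in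
open ResolventDecayAux in
/-- Section 2.2 of the paper: the solution of (A − λI)u = δ with λ outside the spectrum
decays exponentially: |u(g)| ≤ C ρ^{|g₁|+⋯+|gₙ|} for some C > 0 and 0 < ρ < 1. -/
theorem resolvent_delta_exponential_decay
    (n : ℕ) (hn : 0 < n)
    (a : (Fin n → ℤ) → ℂ)
    (ha : (Function.support a).Finite)
    (hsymm : ∀ h : Fin n → ℤ, a (-h) = star (a h))
    (A : lp (fun _ : Fin n → ℤ => ℂ) 2 →L[ℂ] lp (fun _ : Fin n → ℤ => ℂ) 2)
    (hA : ∀ (u : lp (fun _ : Fin n → ℤ => ℂ) 2) (g : Fin n → ℤ),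
      (A u) g = ∑ᶠ h : Fin n → ℤ, a h * u (g + h))
    (lam : ℝ) (hlam : (lam : ℂ) ∉ spectrum ℂ A)
    (u : lp (fun _ : Fin n → ℤ => ℂ) 2)
    (hu : ∀ g : Fin n → ℤ, (A u) g - (lam : ℂ) * u g = if g = 0 then 1 else 0) :
    ∃ C : ℝ, 0 < C ∧ ∃ ρ : ℝ, ρ ∈ Set.Ioo (0 : ℝ) 1 ∧
      ∀ g : Fin n → ℤ, ‖u g‖ ≤ C * ρ ^ (∑ i, (g i).natAbs) := by
  classical
  set s : Finset (Fin n → ℤ) := ha.toFinset with hs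
  have hA' : ∀ (v : Hn n) (g : Fin n → ℤ), (A v) g = ∑ h ∈ s, a h * v (g + h) := by
    intro v g
    rw [hA]
    apply finsum_eq_finset_sum_of_support_subset
    intro h hh
    simp only [Function.mem_support] at hh
    have : a h ≠ 0 := fun h0 => hh (by simp [h0])
    simpa [hs] using this
  set L : (Hn n →L[ℂ] Hn n) := algebraMap ℂ _ (lam : ℂ) with hL
  set D : (Fin n → Bool) → ℂ → (Hn n →L[ℂ] Hn n) :=
    fun b z => toeplitz s (fun h => a h * Complex.exp (-(z * (dotZ b h : ℂ)))) - L with hD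
  have hAt : A = toeplitz s a := by
    ext v g
    rw [hA', toeplitz_apply]
  have hD0 : ∀ b, D b 0 = A - L := by
    intro b
    show toeplitz s _ - L = A - L
    congr 1
    rw [hAt]
    unfold toeplitz
    exact Finset.sum_congr rfl fun h _ => by norm_num
  have hUnit0 : ∀ b, IsUnit (D b 0) := by
    intro b
    rw [hD0]
    have := spectrum.notMem_iff.mp hlam
    simpa [hL] using this.neg
  have hDdiff : ∀ b, Differentiable ℂ (fun z => D b z) := by
    intro b
    have : (fun z => D b z) =
        fun z => (∑ h ∈ s, (a h * Complex.exp (-(z * (dotZ b h : ℂ)))) • shiftCLM h) - L := rfl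
    rw [this]
    apply Differentiable.sub _ (differentiable_const _)
    apply Differentiable.fun_sum
    intro h _
    apply Differentiable.smul_const
    apply Differentiable.mul (differentiable_const _)
    exact Complex.differentiable_exp.comp ((differentiable_id.mul_const _).neg)
  have key : ∀ b : Fin n → Bool, ∃ r > 0, ∀ z : ℂ, ‖z‖ < r → IsUnit (D b z) := by
    intro b
    have hopen : IsOpen ((fun z => D b z) ⁻¹' {x | IsUnit x}) :=
      Units.isOpen.preimage (hDdiff b).continuous
    have h0 : (0 : ℂ) ∈ (fun z => D b z) ⁻¹' {x | IsUnit x} := hUnit0 b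
    obtain ⟨r, hr, hball⟩ := Metric.isOpen_iff.mp hopen 0 h0
    exact ⟨r, hr, fun z hz => hball (by simpa [Metric.mem_ball, dist_eq_norm] using hz)⟩
  choose rr hrrpos hrr using key
  have hne : (Finset.univ : Finset (Fin n → Bool)).Nonempty := Finset.univ_nonempty
  set t : ℝ := (Finset.univ.inf' hne rr) / 2 with htdef
  have hinfpos : 0 < Finset.univ.inf' hne rr :=
    (Finset.lt_inf'_iff hne).mpr fun b _ => hrrpos b
  have htpos : 0 < t := by rw [htdef]; linarith
  have htlt : ∀ b, t < rr b := by
    intro b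
    have h1 : Finset.univ.inf' hne rr ≤ rr b := Finset.inf'_le rr (Finset.mem_univ b)
    rw [htdef]; linarith
  set e0 : Hn n := lp.single 2 (0 : Fin n → ℤ) (1 : ℂ) with he0
  have he0_apply : ∀ g : Fin n → ℤ, e0 g = if g = 0 then 1 else 0 := by
    intro g
    by_cases h : g = 0
    · subst h
      rw [if_pos rfl, he0]
      exact lp.single_apply_self _ _ _
    · rw [if_neg h, he0]
      exact lp.single_apply_ne _ _ _ h
  set F : (Fin n → Bool) → ℂ → Hn n := fun b z => Ring.inverse (D b z) e0 with hF
  set C : ℝ := Finset.univ.sup' hne (fun b => ‖F b (t : ℂ)‖) + 1 with hC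
  have hCpos : 0 < C := by
    have h1 : (0:ℝ) ≤ ‖F hne.choose (t : ℂ)‖ := norm_nonneg _
    have h2 : ‖F hne.choose (t : ℂ)‖ ≤ Finset.univ.sup' hne (fun b => ‖F b (t : ℂ)‖) :=
      Finset.le_sup' (fun b => ‖F b (t : ℂ)‖) (Finset.mem_univ _)
    rw [hC]; linarith
  refine ⟨C, hCpos, Real.exp (-t), ⟨Real.exp_pos _, Real.exp_lt_one_iff.mpr (by linarith)⟩, ?_⟩
  intro g
  set b : Fin n → Bool := fun i => decide (0 ≤ g i) with hb
  set N : ℕ := ∑ i, (g i).natAbs with hN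
  have hdg : dotZ b g = (N : ℤ) := by
    rw [dotZ, hN, Nat.cast_sum]
    refine Finset.sum_congr rfl fun i _ => ?_
    by_cases hi : 0 ≤ g i
    · have hbi : b i = true := by simp [hb, hi]
      rw [hbi]
      simp only [if_true, one_mul]
      omega
    · have hbi : b i = false := by simp [hb, hi]
      rw [hbi]
      simp only [Bool.false_eq_true, if_false, neg_mul, one_mul]
      omega
  -- analytic functions
  set f₁ : ℂ → ℂ := fun z => (F b z : Hn n) g with hf₁
  set f₂ : ℂ → ℂ := fun z => Complex.exp (z * ((dotZ b g : ℤ) : ℂ)) * u g with hf₂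
  have hball : IsOpen (Metric.ball (0:ℂ) (rr b)) := Metric.isOpen_ball
  have hpre : IsPreconnected (Metric.ball (0:ℂ) (rr b)) := (convex_ball _ _).isPreconnected
  have hmem_ball : ∀ z : ℂ, z ∈ Metric.ball (0:ℂ) (rr b) ↔ ‖z‖ < rr b := by
    intro z; rw [Metric.mem_ball, dist_zero_right]
  have hana1 : AnalyticOnNhd ℂ f₁ (Metric.ball 0 (rr b)) := by
    apply DifferentiableOn.analyticOnNhd _ hball
    intro z hz
    apply DifferentiableAt.differentiableWithinAt
    have hzu : IsUnit (D b z) := hrr b z ((hmem_ball z).mp hz)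
    have h1 : DifferentiableAt ℂ (fun z => Ring.inverse (D b z)) z := by
      have h2 := analyticAt_inverse (𝕜 := ℂ) hzu.unit
      rw [IsUnit.unit_spec] at h2
      exact h2.differentiableAt.comp z ((hDdiff b).differentiableAt)
    have h3 : DifferentiableAt ℂ (fun z => F b z) z :=
      h1.clm_apply (differentiableAt_const e0)
    exact ((evalCLM g).differentiable.differentiableAt).comp z h3
  have hana2 : AnalyticOnNhd ℂ f₂ (Metric.ball 0 (rr b)) := by
    apply DifferentiableOn.analyticOnNhd _ hball
    apply Differentiable.differentiableOn
    exact (Complex.differentiable_exp.comp (differentiable_id.mul_const _)).mul_const _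
  -- equality on the imaginary axis
  have him : ∀ y : ℝ, ‖Complex.I * y‖ < rr b →
      f₁ (Complex.I * y) = f₂ (Complex.I * y) := by
    intro y hy
    set z : ℂ := Complex.I * y with hz
    have hzre : ∀ d : ℤ, (z * (d : ℂ)).re = 0 := by
      intro d
      simp [hz, Complex.mul_re]
    have hmem : Memℓp (fun g' => Complex.exp (z * ((dotZ b g' : ℤ) : ℂ)) * u g') 2 := by
      rw [memℓp_gen_iff two_toReal_pos]
      have hsum := lp.memℓp u
      rw [memℓp_gen_iff two_toReal_pos] at hsum
      refine Summable.congr hsum fun g' => ?_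
      congr 1
      rw [norm_mul, Complex.norm_exp, hzre,
        Real.exp_zero, one_mul]
    set m : Hn n := ⟨fun g' => Complex.exp (z * ((dotZ b g' : ℤ) : ℂ)) * u g', hmem⟩ with hm
    have hm_apply : ∀ g', m g' = Complex.exp (z * ((dotZ b g' : ℤ) : ℂ)) * u g' := fun _ => rfl
    have heqD : D b z m = e0 := by
      apply lp.ext
      funext g'
      have hDm : (D b z m) g' =
          (∑ h ∈ s, (a h * Complex.exp (-(z * (dotZ b h : ℂ)))) * m (g' + h))
            - (lam : ℂ) * m g' := by
        show ((toeplitz s _ - L) m) g' = _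
        rw [ContinuousLinearMap.sub_apply, lp.coeFn_sub, Pi.sub_apply, toeplitz_apply]
        congr 1
      rw [hDm]
      have hterm : ∀ h ∈ s, (a h * Complex.exp (-(z * (dotZ b h : ℂ)))) * m (g' + h) =
          Complex.exp (z * ((dotZ b g' : ℤ) : ℂ)) * (a h * u (g' + h)) := by
        intro h _
        rw [hm_apply]
        have hadd : z * ((dotZ b (g' + h) : ℤ) : ℂ) =
            z * ((dotZ b g' : ℤ) : ℂ) + z * ((dotZ b h : ℤ) : ℂ) := by
          rw [dotZ_add]; push_cast; ring
        rw [hadd, Complex.exp_add, Complex.exp_neg]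
        have hne' : Complex.exp (z * ((dotZ b h : ℤ) : ℂ)) ≠ 0 := Complex.exp_ne_zero _
        field_simp
      rw [Finset.sum_congr rfl hterm, ← Finset.mul_sum, ← hA' u g', hm_apply]
      have : Complex.exp (z * ((dotZ b g' : ℤ) : ℂ)) * (A u) g'
          - (lam : ℂ) * (Complex.exp (z * ((dotZ b g' : ℤ) : ℂ)) * u g')
          = Complex.exp (z * ((dotZ b g' : ℤ) : ℂ)) * ((A u) g' - (lam : ℂ) * u g') := by
        ring
      rw [this, hu, he0_apply]
      by_cases hg' : g' = 0
      · simp [hg', dotZ_zero]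
      · simp [hg']
    have hzu : IsUnit (D b z) := hrr b z hy
    have hFm : F b z = m := by
      rw [hF]
      show Ring.inverse (D b z) e0 = m
      rw [← heqD, ← ContinuousLinearMap.mul_apply, Ring.inverse_mul_cancel _ hzu,
        ContinuousLinearMap.one_apply]
    show (F b z : Hn n) g = f₂ z
    rw [hFm, hm_apply, hf₂]
  -- frequently equal near 0
  have hfreq : ∃ᶠ z in nhdsWithin 0 {z : ℂ | z ≠ 0}, f₁ z = f₂ z := by
    have hseq : Filter.Tendsto (fun k : ℕ => Complex.I * ((rr b / (k + 2) : ℝ) : ℂ))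
        Filter.atTop (nhdsWithin 0 {z : ℂ | z ≠ 0}) := by
      apply tendsto_nhdsWithin_of_tendsto_nhds_of_eventually_within
      · have h1 : Filter.Tendsto (fun k : ℕ => (rr b / (k + 2) : ℝ)) Filter.atTop (nhds 0) := by
          apply Filter.Tendsto.div_atTop (tendsto_const_nhds)
          exact Filter.tendsto_atTop_add_const_right _ 2 tendsto_natCast_atTop_atTop
        have h2 := ((Complex.continuous_ofReal.tendsto 0).comp h1).const_mul Complex.I
        simpa [Function.comp_def] using h2
      · filter_upwards with k
        have hpos : (0:ℝ) < rr b / (k + 2) := div_pos (hrrpos b) (by positivity)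
        simp only [Set.mem_setOf_eq, ne_eq, mul_eq_zero, Complex.I_ne_zero, false_or,
          Complex.ofReal_eq_zero]
        exact ne_of_gt hpos
    apply hseq.frequently
    apply Filter.Frequently.of_forall
    intro k
    apply him
    have h2 : (0:ℝ) < (k:ℝ) + 2 := by positivity
    have : ‖Complex.I * ((rr b / (k + 2) : ℝ) : ℂ)‖ = rr b / (k + 2) := by
      rw [norm_mul, Complex.norm_I, one_mul, Complex.norm_real, Real.norm_eq_abs,
        abs_of_pos (div_pos (hrrpos b) (by positivity))]
    rw [this]
    rw [div_lt_iff₀ h2]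
    nlinarith [hrrpos b]
  have heqOn : Set.EqOn f₁ f₂ (Metric.ball 0 (rr b)) :=
    hana1.eqOn_of_preconnected_of_frequently_eq hana2 hpre
      (Metric.mem_ball_self (hrrpos b)) hfreq
  have htmem : ((t : ℝ) : ℂ) ∈ Metric.ball (0:ℂ) (rr b) := by
    rw [hmem_ball]
    rw [Complex.norm_real, Real.norm_eq_abs, abs_of_pos htpos]
    exact htlt b
  have hval := heqOn htmem
  -- conclude
  have habs : ‖Complex.exp (((t:ℝ):ℂ) * ((dotZ b g : ℤ) : ℂ))‖ =
      Real.exp (t * N) := by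
    rw [Complex.norm_exp]
    congr 1
    rw [hdg]
    have hc : ((t:ℝ):ℂ) * (((N : ℤ)):ℂ) = (((t * N : ℝ)):ℂ) := by push_cast; ring
    rw [hc, Complex.ofReal_re]
  have hb1 : ‖f₁ ((t:ℝ):ℂ)‖ ≤ ‖F b ((t:ℝ):ℂ)‖ := abs_apply_le_norm g _
  have hb2 : ‖F b ((t:ℝ):ℂ)‖ ≤ Finset.univ.sup' hne (fun b => ‖F b ((t:ℝ):ℂ)‖) :=
    Finset.le_sup' (fun b => ‖F b ((t:ℝ):ℂ)‖) (Finset.mem_univ b)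
  have hkey : Real.exp (t * N) * ‖u g‖ ≤ C := by
    have : ‖f₂ ((t:ℝ):ℂ)‖ = Real.exp (t * N) * ‖u g‖ := by
      rw [hf₂]
      rw [norm_mul, habs]
    rw [← this, ← hval]
    rw [hC]
    linarith
  have hexp_pos : (0:ℝ) < Real.exp (t * N) := Real.exp_pos _
  have hpow : Real.exp (-t) ^ N = (Real.exp (t * N))⁻¹ := by
    rw [← Real.exp_nat_mul, ← Real.exp_neg]
    congr 1
    ring
  rw [hpow, ← div_eq_mul_inv, le_div_iff₀ hexp_pos, mul_comm]
  exact hkey
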